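/- Let n ≥ 1 and let S be a set of at least n+2 points in ℓ_4^n. Then the ratio (max_{x,y ∈ S} ‖x−y‖_4) / (min_{x,y ∈ S, x≠y} ‖x−y‖_4) is at least (1 + 2/n)^{1/4} if n is even, and at least (1 + 2/(n − (n+2)^{−1}))^{1/4} if n is odd. -/

import Mathlib

open Finset

/-- The 4-norm on `ℝ^n`. -/
noncomputable def norm4 {n : ℕ} (x : Fin n → ℝ) : ℝ :=
  (∑ m, (x m) ^ 4) ^ ((1 : ℝ) / 4)

lemma norm4_sum_nonneg {n : ℕ} (x : Fin n → ℝ) : 0 ≤ ∑ m, (x m) ^ 4 :=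
  Finset.sum_nonneg fun m _ => (by decide : Even 4).pow_nonneg _

lemma norm4_nonneg {n : ℕ} (x : Fin n → ℝ) : 0 ≤ norm4 x :=
  Real.rpow_nonneg (norm4_sum_nonneg x) _

lemma norm4_pow4 {n : ℕ} (x : Fin n → ℝ) : (norm4 x) ^ (4:ℕ) = ∑ m, (x m) ^ 4 := by
  rw [norm4, ← Real.rpow_natCast (_ ^ _) 4, ← Real.rpow_mul (norm4_sum_nonneg x)]
  norm_num

lemma norm4_pos {n : ℕ} {x : Fin n → ℝ} (hx : x ≠ 0) : 0 < norm4 x := by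
  have : ∃ j, x j ≠ 0 := Function.ne_iff.mp hx
  obtain ⟨j, hj⟩ := this
  apply Real.rpow_pos_of_pos
  apply Finset.sum_pos' (fun m _ => (by decide : Even 4).pow_nonneg _)
  exact ⟨j, Finset.mem_univ _, by positivity⟩

lemma quad_identity {α : Type*} [DecidableEq α] (T : Finset α) (c a : α → ℝ)
    (h0 : ∑ x ∈ T, c x = 0) (h1 : ∑ x ∈ T, c x * a x = 0) :
    ∑ x ∈ T, ∑ y ∈ T, c x * c y * (a x - a y) ^ 4
      = 6 * (∑ x ∈ T, c x * (a x) ^ 2) ^ 2 := by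
  have key : ∀ x y, c x * c y * (a x - a y) ^ 4 =
      (c x * a x ^ 4) * c y - 4 * ((c x * a x ^ 3) * (c y * a y))
      + 6 * ((c x * a x ^ 2) * (c y * a y ^ 2))
      - 4 * ((c x * a x) * (c y * a y ^ 3)) + c x * (c y * a y ^ 4) := by
    intro x y; ring
  simp_rw [key, Finset.sum_add_distrib, Finset.sum_sub_distrib, ← Finset.mul_sum,
    ← Finset.sum_mul, h0, h1]
  have step : ∀ x ∈ T, ∑ y ∈ T,
      (c x * a x ^ 4 * c y - 4 * (c x * a x ^ 3 * (c y * a y)) + 6 * (c x * a x ^ 2 * (c y * a y ^ 2)))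
      = 6 * (c x * a x ^ 2) * ∑ y ∈ T, c y * a y ^ 2 := by
    intro x _
    have e1 : ∑ y ∈ T, 6 * (c x * a x ^ 2 * (c y * a y ^ 2))
        = (6 * (c x * a x ^ 2)) * ∑ y ∈ T, c y * a y ^ 2 := by
      rw [Finset.mul_sum]; exact Finset.sum_congr rfl (fun y _ => by ring)
    have e2 : ∑ y ∈ T, 4 * (c x * a x ^ 3 * (c y * a y))
        = (4 * (c x * a x ^ 3)) * ∑ y ∈ T, c y * a y := by
      rw [Finset.mul_sum]; exact Finset.sum_congr rfl (fun y _ => by ring)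
    have e3 : ∑ y ∈ T, c x * a x ^ 4 * c y = (c x * a x ^ 4) * ∑ y ∈ T, c y := by
      rw [Finset.mul_sum]
    rw [Finset.sum_add_distrib, Finset.sum_sub_distrib, e1, e2, e3, h0, h1]
    ring
  rw [Finset.sum_congr rfl step, ← Finset.sum_mul]
  have e4 : ∑ x ∈ T, 6 * (c x * a x ^ 2) = 6 * ∑ x ∈ T, c x * a x ^ 2 := by
    rw [Finset.mul_sum]
  rw [e4]
  ring
set_option maxHeartbeats 1000000 in
/-- **Theorem (main theorem, ℓ₄ version of Schütte's theorem).**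
If `S` is a set of at least `n+2` points in `ℓ₄ⁿ`, then the ratio of the maximum
distance to the minimum distance in `S` is at least `(1 + 2/n)^{1/4}` for even `n`,
and at least `(1 + 2/(n - (n+2)⁻¹))^{1/4}` for odd `n`. -/
theorem stmt0 (n : ℕ) (hn : 1 ≤ n) (S : Finset (Fin n → ℝ)) (hS : n + 2 ≤ S.card) :
    (if Even n then (1 + 2 / (n : ℝ)) ^ ((1 : ℝ) / 4)
      else (1 + 2 / ((n : ℝ) - ((n : ℝ) + 2)⁻¹)) ^ ((1 : ℝ) / 4)) ≤
    sSup {d : ℝ | ∃ x ∈ S, ∃ y ∈ S, d = norm4 (x - y)} /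
      sInf {d : ℝ | ∃ x ∈ S, ∃ y ∈ S, x ≠ y ∧ d = norm4 (x - y)} := by
  classical
  set A : Set ℝ := {d : ℝ | ∃ x ∈ S, ∃ y ∈ S, d = norm4 (x - y)} with hA
  set B : Set ℝ := {d : ℝ | ∃ x ∈ S, ∃ y ∈ S, x ≠ y ∧ d = norm4 (x - y)} with hB
  have hAfin : A.Finite := by
    have : A ⊆ ↑((S ×ˢ S).image fun p => norm4 (p.1 - p.2)) := by
      rintro d ⟨x, hx, y, hy, rfl⟩
      simp only [Finset.coe_image, Set.mem_image, Finset.mem_coe, Finset.mem_product]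
      exact ⟨(x, y), ⟨hx, hy⟩, rfl⟩
    exact Set.Finite.subset (Finset.finite_toSet _) this
  have hBfin : B.Finite := by
    have : B ⊆ A := by rintro d ⟨x, hx, y, hy, _, rfl⟩; exact ⟨x, hx, y, hy, rfl⟩
    exact hAfin.subset this
  have hBne : B.Nonempty := by
    obtain ⟨x, hx, y, hy, hxy⟩ := Finset.one_lt_card.mp (by omega : 1 < S.card)
    exact ⟨norm4 (x - y), x, hx, y, hy, hxy, rfl⟩
  set M : ℝ := sSup A with hM
  set m : ℝ := sInf B with hm
  have hm_mem : m ∈ B := hBne.csInf_mem hBfin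
  have hm_pos : 0 < m := by
    obtain ⟨x, _, y, _, hxy, hd⟩ := hm_mem
    rw [hd]
    exact norm4_pos (sub_ne_zero_of_ne hxy)
  have hM_ub : ∀ x ∈ S, ∀ y ∈ S, norm4 (x - y) ≤ M :=
    fun x hx y hy => le_csSup hAfin.bddAbove ⟨x, hx, y, hy, rfl⟩
  have hm_lb : ∀ x ∈ S, ∀ y ∈ S, x ≠ y → m ≤ norm4 (x - y) :=
    fun x hx y hy hxy => csInf_le hBfin.bddBelow ⟨x, hx, y, hy, hxy, rfl⟩
  have hM_pos : 0 < M := by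
    obtain ⟨x, hx, y, hy, hxy, hd⟩ := hm_mem
    exact lt_of_lt_of_le hm_pos (hd ▸ hM_ub x hx y hy)
  -- fourth powers
  set D : (Fin n → ℝ) → (Fin n → ℝ) → ℝ := fun x y => ∑ j, (x j - y j) ^ 4 with hD
  have hDnorm : ∀ x y, D x y = (norm4 (x - y)) ^ (4:ℕ) := by
    intro x y; rw [norm4_pow4]; rfl
  have hD_ub : ∀ x ∈ S, ∀ y ∈ S, D x y ≤ M ^ (4:ℕ) := by
    intro x hx y hy
    rw [hDnorm]
    exact pow_le_pow_left₀ (norm4_nonneg _) (hM_ub x hx y hy) 4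
  have hD_lb : ∀ x ∈ S, ∀ y ∈ S, x ≠ y → m ^ (4:ℕ) ≤ D x y := by
    intro x hx y hy hxy
    rw [hDnorm]
    exact pow_le_pow_left₀ hm_pos.le (hm_lb x hx y hy hxy) 4
  have hD_diag : ∀ x, D x x = 0 := by
    intro x; apply Finset.sum_eq_zero; intro j _; simp
  -- pick n+2 points and a linear relation
  obtain ⟨T, hTS, hTcard⟩ := Finset.exists_subset_card_eq (s := S) (n := n + 2) hS
  have hfr : Module.finrank ℝ (Fin n → ℝ) + 1 < T.card := by
    rw [hTcard, Module.finrank_fin_fun]; omega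
  obtain ⟨c, hc0, hcsum, x₀, hx₀T, hx₀⟩ :=
    Module.exists_nontrivial_relation_sum_zero_of_finrank_succ_lt_card hfr
  have hc1 : ∀ j : Fin n, ∑ x ∈ T, c x * x j = 0 := by
    intro j
    have := congrFun hc0 j
    rw [Finset.sum_apply] at this
    simpa using this
  -- master inequality
  have hmaster : 0 ≤ ∑ x ∈ T, ∑ y ∈ T, c x * c y * D x y := by
    have : ∑ x ∈ T, ∑ y ∈ T, c x * c y * D x y
        = ∑ j, ∑ x ∈ T, ∑ y ∈ T, c x * c y * (x j - y j) ^ 4 := by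
      simp_rw [hD, Finset.mul_sum]
      refine Eq.symm ?_
      rw [Finset.sum_comm]
      exact Finset.sum_congr rfl fun x _ => Finset.sum_comm
    rw [this]
    apply Finset.sum_nonneg
    intro j _
    rw [quad_identity T c (fun x => x j) hcsum (hc1 j)]
    positivity
  -- sign decomposition
  set P : Finset (Fin n → ℝ) := T.filter (fun x => 0 < c x) with hP
  set N : Finset (Fin n → ℝ) := T.filter (fun x => ¬ 0 < c x) with hNdef
  have hPpos : ∀ x ∈ P, 0 < c x := fun x hx => (Finset.mem_filter.mp hx).2
  have hNneg : ∀ x ∈ N, c x ≤ 0 := fun x hx => not_lt.mp (Finset.mem_filter.mp hx).2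
  have hPT : P ⊆ T := Finset.filter_subset _ _
  have hNT : N ⊆ T := Finset.filter_subset _ _
  have hdisj : Disjoint P N := Finset.disjoint_filter_filter_not T T _
  have hunion : P ∪ N = T := Finset.filter_union_filter_not_eq _ T
  set s := ∑ x ∈ P, c x with hs
  have hsum_split : ∀ f : (Fin n → ℝ) → ℝ,
      ∑ x ∈ T, f x = ∑ x ∈ P, f x + ∑ x ∈ N, f x := by
    intro f; rw [← hunion, Finset.sum_union hdisj]
  have hsN : ∑ x ∈ N, c x = -s := by
    have := hsum_split c; rw [hcsum] at this; linarith
  have hTne : T.Nonempty := Finset.card_pos.mp (by omega)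
  have hPne : P.Nonempty := by
    by_contra h
    rw [Finset.not_nonempty_iff_eq_empty] at h
    have hall : ∀ x ∈ T, c x ≤ 0 := by
      intro x hx
      by_contra hc
      have : x ∈ P := Finset.mem_filter.mpr ⟨hx, not_le.mp hc⟩
      simp [h] at this
    exact hx₀ ((Finset.sum_eq_zero_iff_of_nonpos hall).mp hcsum x₀ hx₀T)
  have hNne : N.Nonempty := by
    by_contra h
    rw [Finset.not_nonempty_iff_eq_empty] at h
    have hall : ∀ x ∈ T, 0 < c x := by
      intro x hx
      by_contra hc
      have : x ∈ N := Finset.mem_filter.mpr ⟨hx, hc⟩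
      simp [h] at this
    exact absurd hcsum (ne_of_gt (Finset.sum_pos hall hTne))
  have hspos : 0 < s := Finset.sum_pos hPpos hPne
  have hkl : P.card + N.card = n + 2 := by
    rw [← Finset.card_union_of_disjoint hdisj, hunion, hTcard]
  -- bounds on the four blocks
  have same_sign_bound : ∀ Q : Finset (Fin n → ℝ), Q ⊆ T →
      (∀ x ∈ Q, ∀ y ∈ Q, 0 ≤ c x * c y) →
      ∑ x ∈ Q, ∑ y ∈ Q, c x * c y * D x y
        ≤ M ^ (4:ℕ) * (∑ x ∈ Q, c x) ^ 2 - M ^ (4:ℕ) * ∑ x ∈ Q, c x ^ 2 := by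
    intro Q hQT hQsign
    have hterm : ∀ x ∈ Q, ∀ y ∈ Q, c x * c y * D x y
        ≤ M ^ (4:ℕ) * (c x * c y) - (if x = y then M ^ (4:ℕ) * c x ^ 2 else 0) := by
      intro x hx y hy
      by_cases hxy : x = y
      · subst hxy
        rw [hD_diag, if_pos rfl, mul_zero]
        have : c x * c x = c x ^ 2 := (sq (c x)).symm
        rw [this]
        ring_nf
        exact le_refl _
      · rw [if_neg hxy, sub_zero, mul_comm (M ^ (4:ℕ))]
        exact mul_le_mul_of_nonneg_left (hD_ub x (hTS (hQT hx)) y (hTS (hQT hy)))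
          (hQsign x hx y hy)
    calc ∑ x ∈ Q, ∑ y ∈ Q, c x * c y * D x y
        ≤ ∑ x ∈ Q, ∑ y ∈ Q,
            (M ^ (4:ℕ) * (c x * c y) - (if x = y then M ^ (4:ℕ) * c x ^ 2 else 0)) :=
          Finset.sum_le_sum fun x hx => Finset.sum_le_sum fun y hy => hterm x hx y hy
      _ = M ^ (4:ℕ) * (∑ x ∈ Q, c x) ^ 2 - M ^ (4:ℕ) * ∑ x ∈ Q, c x ^ 2 := by
          simp_rw [Finset.sum_sub_distrib, Finset.sum_ite_eq]
          have e1 : ∑ x ∈ Q, ∑ y ∈ Q, M ^ (4:ℕ) * (c x * c y)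
              = M ^ (4:ℕ) * (∑ x ∈ Q, c x) ^ 2 := by
            rw [sq, Finset.sum_mul_sum, Finset.mul_sum]
            exact Finset.sum_congr rfl fun x _ => by rw [Finset.mul_sum]
          have e2 : ∑ x ∈ Q, (if x ∈ Q then M ^ (4:ℕ) * c x ^ 2 else 0)
              = M ^ (4:ℕ) * ∑ x ∈ Q, c x ^ 2 := by
            rw [Finset.mul_sum]
            exact Finset.sum_congr rfl fun x hx => by rw [if_pos hx]
          rw [e1, e2]
  have cross_bound : ∀ (Q R : Finset (Fin n → ℝ)), Q ⊆ T → R ⊆ T →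
      (∀ x ∈ Q, ∀ y ∈ R, c x * c y ≤ 0 ∧ x ≠ y) →
      ∑ x ∈ Q, ∑ y ∈ R, c x * c y * D x y
        ≤ m ^ (4:ℕ) * ((∑ x ∈ Q, c x) * (∑ y ∈ R, c y)) := by
    intro Q R hQT hRT hsign
    calc ∑ x ∈ Q, ∑ y ∈ R, c x * c y * D x y
        ≤ ∑ x ∈ Q, ∑ y ∈ R, c x * c y * m ^ (4:ℕ) := by
          apply Finset.sum_le_sum; intro x hx
          apply Finset.sum_le_sum; intro y hy
          exact mul_le_mul_of_nonpos_left
            (hD_lb x (hTS (hQT hx)) y (hTS (hRT hy)) (hsign x hx y hy).2)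
            (hsign x hx y hy).1
      _ = m ^ (4:ℕ) * ((∑ x ∈ Q, c x) * (∑ y ∈ R, c y)) := by
          rw [Finset.sum_mul_sum, Finset.mul_sum]
          refine Finset.sum_congr rfl fun x _ => ?_
          rw [Finset.mul_sum]
          exact Finset.sum_congr rfl fun y _ => by ring
  have hPNne : ∀ x ∈ P, ∀ y ∈ N, c x * c y ≤ 0 ∧ x ≠ y := by
    intro x hx y hy
    refine ⟨mul_nonpos_of_nonneg_of_nonpos (hPpos x hx).le (hNneg y hy), ?_⟩
    intro h; subst h
    exact absurd (hNneg x hy) (not_le.mpr (hPpos x hx))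
  have hNPne : ∀ x ∈ N, ∀ y ∈ P, c x * c y ≤ 0 ∧ x ≠ y := by
    intro x hx y hy
    refine ⟨mul_nonpos_of_nonpos_of_nonneg (hNneg x hx) (hPpos y hy).le, ?_⟩
    intro h; subst h
    exact absurd (hNneg x hx) (not_le.mpr (hPpos x hy))
  -- split the double sum
  have hsplit : ∑ x ∈ T, ∑ y ∈ T, c x * c y * D x y
      = (∑ x ∈ P, ∑ y ∈ P, c x * c y * D x y + ∑ x ∈ P, ∑ y ∈ N, c x * c y * D x y)
      + (∑ x ∈ N, ∑ y ∈ P, c x * c y * D x y + ∑ x ∈ N, ∑ y ∈ N, c x * c y * D x y) := by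
    rw [hsum_split (fun x => ∑ y ∈ T, c x * c y * D x y)]
    congr 1
    · rw [← Finset.sum_add_distrib]
      exact Finset.sum_congr rfl fun x _ => by rw [← hunion, Finset.sum_union hdisj]
    · rw [← Finset.sum_add_distrib]
      exact Finset.sum_congr rfl fun x _ => by rw [← hunion, Finset.sum_union hdisj]
  -- put everything together
  set QP := ∑ x ∈ P, c x ^ 2 with hQP
  set QN := ∑ x ∈ N, c x ^ 2 with hQN
  have key : 2 * m ^ (4:ℕ) * s ^ 2 ≤ M ^ (4:ℕ) * (2 * s ^ 2 - QP - QN) := by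
    have b1 := same_sign_bound P hPT (fun x hx y hy =>
      mul_nonneg (hPpos x hx).le (hPpos y hy).le)
    have b2 := same_sign_bound N hNT (fun x hx y hy => by
      nlinarith [hNneg x hx, hNneg y hy])
    have b3 := cross_bound P N hPT hNT hPNne
    have b4 := cross_bound N P hNT hPT hNPne
    rw [hsN] at b2 b3 b4
    have h0 := hmaster
    rw [hsplit] at h0
    nlinarith [h0, b1, b2, b3, b4]
  -- Cauchy-Schwarz
  have csP : s ^ 2 ≤ (P.card : ℝ) * QP := sq_sum_le_card_mul_sum_sq
  have csN : s ^ 2 ≤ (N.card : ℝ) * QN := by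
    have := sq_sum_le_card_mul_sum_sq (s := N) (f := c)
    rwa [hsN, neg_sq] at this
  have hMnn : (0:ℝ) ≤ M ^ (4:ℕ) := by positivity
  set k := (P.card : ℝ) with hk
  set l := (N.card : ℝ) with hl
  have hk1 : (1:ℝ) ≤ k := by
    simp only [hk]; exact_mod_cast Finset.card_pos.mpr hPne
  have hl1 : (1:ℝ) ≤ l := by
    simp only [hl]; exact_mod_cast Finset.card_pos.mpr hNne
  have hklsum : k + l = (n:ℝ) + 2 := by
    simp only [hk, hl]; exact_mod_cast hkl
  clear_value M m s QP QN k l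
  -- main polynomial inequality: 2 m⁴ k l ≤ M⁴ (2 k l - (k + l))
  have main : 2 * m ^ (4:ℕ) * (k * l) ≤ M ^ (4:ℕ) * (2 * (k * l) - (k + l)) := by
    have hkpos : (0:ℝ) < k := by linarith
    have hlpos : (0:ℝ) < l := by linarith
    have hs2 : (0:ℝ) < s ^ 2 := by positivity
    have i1 : s ^ 2 * l ≤ k * QP * l := mul_le_mul_of_nonneg_right csP hlpos.le
    have i2 : s ^ 2 * k ≤ l * QN * k := mul_le_mul_of_nonneg_right csN hkpos.le
    have inner : (2 * s ^ 2 - QP - QN) * (k * l) ≤ s ^ 2 * (2 * (k * l) - (k + l)) := by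
      nlinarith [i1, i2]
    have hA1 : M ^ (4:ℕ) * ((2 * s ^ 2 - QP - QN) * (k * l))
        ≤ M ^ (4:ℕ) * (s ^ 2 * (2 * (k * l) - (k + l))) :=
      mul_le_mul_of_nonneg_left inner hMnn
    have hA2 : 2 * m ^ (4:ℕ) * s ^ 2 * (k * l)
        ≤ M ^ (4:ℕ) * ((2 * s ^ 2 - QP - QN) * (k * l)) := by
      have h := mul_le_mul_of_nonneg_right key (mul_pos hkpos hlpos).le
      nlinarith [h]
    apply le_of_mul_le_mul_right _ hs2
    nlinarith [hA1, hA2]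
  obtain ⟨kn, ln, hk', hl', hkln⟩ : ∃ kn ln : ℕ, k = (kn:ℝ) ∧ l = (ln:ℝ) ∧ kn + ln = n + 2 :=
    ⟨P.card, N.card, by rw [hk], by rw [hl], hkl⟩
  clear hc0 hcsum hc1 hmaster hsum_split hsN hPpos hNneg hspos csP csN
  clear same_sign_bound cross_bound hsplit key hDnorm hD_ub hD_lb hD_diag
  clear hm_lb hM_ub hm_mem hBne hAfin hBfin hTS hTcard hfr hx₀ hx₀T hPne hNne hTne
  clear hdisj hunion hPT hNT hs hQP hQN hMnn hk hl hkl
  clear s QP QN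
  clear hP hNdef hPNne hNPne
  clear P N
  clear c x₀ T
  clear hD D
  clear hM hm hA hB
  clear A B
  have hMnn : (0:ℝ) ≤ M ^ (4:ℕ) := by positivity
  have hklpos : (0:ℝ) < k * l := by nlinarith
  -- conclude
  have hratio : ∀ r : ℝ, 0 ≤ r → r * m ^ (4:ℕ) ≤ M ^ (4:ℕ) → r ^ ((1:ℝ)/4) ≤ M / m := by
    intro r hr h
    have hdivpos : (0:ℝ) < M / m := div_pos hM_pos hm_pos
    have hMm : r ≤ (M / m) ^ (4:ℕ) := by
      rw [div_pow, le_div_iff₀ (by positivity)]; linarith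
    have h2 : r ^ ((1:ℝ)/4) ≤ ((M/m) ^ (4:ℕ)) ^ ((1:ℝ)/4) :=
      Real.rpow_le_rpow hr hMm (by norm_num)
    calc r ^ ((1:ℝ)/4) ≤ ((M/m) ^ (4:ℕ)) ^ ((1:ℝ)/4) := h2
      _ = M / m := by
        rw [← Real.rpow_natCast (M/m) 4, ← Real.rpow_mul hdivpos.le]
        norm_num
  have hnR : (1:ℝ) ≤ (n:ℝ) := by exact_mod_cast hn
  have main' : 2 * m ^ (4:ℕ) * (k * l) ≤ M ^ (4:ℕ) * (2 * (k * l) - ((n:ℝ) + 2)) := by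
    rwa [hklsum] at main
  have hmain2 : ((n:ℝ) + 2) * (2 * m ^ (4:ℕ) * (k * l))
      ≤ ((n:ℝ) + 2) * (M ^ (4:ℕ) * (2 * (k * l) - ((n:ℝ) + 2))) :=
    mul_le_mul_of_nonneg_left main' (by positivity)
  have hm4pos : (0:ℝ) < m ^ (4:ℕ) := by positivity
  by_cases hpar : Even n
  · rw [if_pos hpar]
    apply hratio _ (by positivity)
    have hkl4 : 4 * (k * l) ≤ ((n:ℝ) + 2) ^ 2 := by nlinarith [sq_nonneg (k - l)]
    have hgap : (0:ℝ) ≤ M ^ (4:ℕ) * (((n:ℝ)+2)^2 - 4*(k*l)) :=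
      mul_nonneg hMnn (by linarith)
    have h2 : (2*(k*l)) * (((n:ℝ) + 2) * m ^ (4:ℕ))
        ≤ (2*(k*l)) * ((n:ℝ) * M ^ (4:ℕ)) := by nlinarith [hmain2, hgap]
    have hgoal : ((n:ℝ) + 2) * m ^ (4:ℕ) ≤ (n:ℝ) * M ^ (4:ℕ) :=
      le_of_mul_le_mul_left h2 (by linarith)
    have hnpos : (0:ℝ) < n := by linarith
    rw [show (1 + 2/(n:ℝ)) = ((n:ℝ) + 2) / n by field_simp, div_mul_eq_mul_div,
      div_le_iff₀ hnpos]
    linarith [hgoal]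
  · rw [if_neg hpar]
    have hkne : kn ≠ ln := by
      intro h
      exact hpar ⟨ln - 1, by omega⟩
    have hklz : (1:ℝ) ≤ (k - l) ^ 2 := by
      have hz0 : ((kn:ℤ) - ln) ≠ 0 := sub_ne_zero_of_ne (by exact_mod_cast hkne)
      have h1 : (1:ℝ) ≤ |(((kn:ℤ) - (ln:ℤ) : ℤ) : ℝ)| := by
        exact_mod_cast Int.one_le_abs hz0
      have hz : (k - l : ℝ) = (((kn:ℤ) - (ln:ℤ) : ℤ) : ℝ) := by
        rw [hk', hl']; push_cast; ring
      calc (1:ℝ) = 1^2 := by norm_num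
        _ ≤ |(((kn:ℤ) - (ln:ℤ) : ℤ) : ℝ)|^2 := pow_le_pow_left₀ (by norm_num) h1 2
        _ = (k - l)^2 := by rw [sq_abs, hz]
    have hkl4 : 4 * (k * l) ≤ ((n:ℝ) + 2) ^ 2 - 1 := by
      nlinarith [hklz, sq_nonneg (k - l)]
    have hd : (0:ℝ) < (n:ℝ)^2 + 2*(n:ℝ) - 1 := by nlinarith
    have hgap : (0:ℝ) ≤ ((n:ℝ)+2) * (M ^ (4:ℕ) * (((n:ℝ)+2)^2 - 1 - 4*(k*l))) :=
      mul_nonneg (by positivity) (mul_nonneg hMnn (by linarith))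
    have hmain3 : ((n:ℝ) + 1) * (((n:ℝ) + 3) * (2 * m ^ (4:ℕ) * (k * l)))
        ≤ ((n:ℝ) + 1) * (((n:ℝ) + 3) * (M ^ (4:ℕ) * (2 * (k * l) - ((n:ℝ) + 2)))) :=
      mul_le_mul_of_nonneg_left (mul_le_mul_of_nonneg_left main' (by positivity))
        (by positivity)
    have h2 : (2*(k*l)) * (((n:ℝ) + 1) * ((n:ℝ) + 3) * m ^ (4:ℕ))
        ≤ (2*(k*l)) * (((n:ℝ)^2 + 2*(n:ℝ) - 1) * M ^ (4:ℕ)) := by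
      nlinarith [hmain3, hgap]
    have hgoal : ((n:ℝ) + 1) * ((n:ℝ) + 3) * m ^ (4:ℕ)
        ≤ ((n:ℝ)^2 + 2*(n:ℝ) - 1) * M ^ (4:ℕ) :=
      le_of_mul_le_mul_left h2 (by linarith)
    have hn2 : ((n:ℝ) + 2) ≠ 0 := by positivity
    have hden : (0:ℝ) < (n:ℝ) - ((n:ℝ) + 2)⁻¹ := by
      have h1 : ((n:ℝ) + 2)⁻¹ < 1 := inv_lt_one_of_one_lt₀ (by linarith)
      linarith
    have hrpos : (0:ℝ) ≤ 1 + 2 / ((n:ℝ) - ((n:ℝ) + 2)⁻¹) := by positivity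
    apply hratio _ hrpos
    have he : 1 + 2 / ((n:ℝ) - ((n:ℝ) + 2)⁻¹)
        = (((n:ℝ) + 1) * ((n:ℝ) + 3)) / ((n:ℝ)^2 + 2*(n:ℝ) - 1) := by
      have hdne : ((n:ℝ)^2 + 2*(n:ℝ) - 1) ≠ 0 := ne_of_gt hd
      have hsub : (n:ℝ) - ((n:ℝ) + 2)⁻¹ = ((n:ℝ)^2 + 2*(n:ℝ) - 1) / ((n:ℝ) + 2) := by
        rw [eq_div_iff hn2, sub_mul, inv_mul_cancel₀ hn2]; ring
      rw [hsub, div_div_eq_mul_div, eq_div_iff hdne, add_mul, one_mul,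
        div_mul_cancel₀ _ hdne]
      ring
    rw [he, div_mul_eq_mul_div, div_le_iff₀ hd]
    linarith [hgoal]
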